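/- Generalised Euler angle decomposition: for 1 ≤ i < j ≤ 3 and θ ∈ ℝ, let A_{ij}(θ) be the 3×3 matrix with (i,i) and (j,j) entries cos θ, (i,j) entry −sin θ, (j,i) entry sin θ, all other diagonal entries 1, and all other entries 0. Then every 3×3 real matrix A with AᵀA = I and det A = 1 can be written as A = A₁₂(θ₁₂) A₁₃(θ₁₃) A₂₃(θ₂₃) for some angles θ₁₂, θ₂₃ ∈ (−π, π] and θ₁₃ ∈ [−π/2, π/2]. -/

import Mathlib

open Matrix Real

/-- Elementary rotation in the (1,2)-plane of `ℝ³`. -/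
noncomputable def elemRot12 (θ : ℝ) : Matrix (Fin 3) (Fin 3) ℝ :=
  !![Real.cos θ, -Real.sin θ, 0; Real.sin θ, Real.cos θ, 0; 0, 0, 1]

/-- Elementary rotation in the (1,3)-plane of `ℝ³`. -/
noncomputable def elemRot13 (θ : ℝ) : Matrix (Fin 3) (Fin 3) ℝ :=
  !![Real.cos θ, 0, -Real.sin θ; 0, 1, 0; Real.sin θ, 0, Real.cos θ]

/-- Elementary rotation in the (2,3)-plane of `ℝ³`. -/
noncomputable def elemRot23 (θ : ℝ) : Matrix (Fin 3) (Fin 3) ℝ :=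
  !![1, 0, 0; 0, Real.cos θ, -Real.sin θ; 0, Real.sin θ, Real.cos θ]

lemma elemRot_prod_eq (a b c : ℝ) : elemRot12 a * elemRot13 b * elemRot23 c =
  !![Real.cos a * Real.cos b, -(Real.cos a * Real.sin b * Real.sin c) - Real.sin a * Real.cos c,
       -(Real.cos a * Real.sin b * Real.cos c) + Real.sin a * Real.sin c;
     Real.sin a * Real.cos b, -(Real.sin a * Real.sin b * Real.sin c) + Real.cos a * Real.cos c,
       -(Real.sin a * Real.sin b * Real.cos c) - Real.cos a * Real.sin c;
     Real.sin b, Real.cos b * Real.sin c, Real.cos b * Real.cos c] := by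
  rw [elemRot12, elemRot13, elemRot23, Matrix.mul_fin_three, Matrix.mul_fin_three]
  congr 1 <;> ring

set_option maxHeartbeats 1000000 in
theorem euler_angle_decomposition
    (A : Matrix (Fin 3) (Fin 3) ℝ) (hA : Aᵀ * A = 1) (hdet : A.det = 1) :
    ∃ θ₁₂ θ₁₃ θ₂₃ : ℝ,
      θ₁₂ ∈ Set.Ioc (-π) π ∧ θ₂₃ ∈ Set.Ioc (-π) π ∧
      θ₁₃ ∈ Set.Icc (-(π / 2)) (π / 2) ∧
      A = elemRot12 θ₁₂ * elemRot13 θ₁₃ * elemRot23 θ₂₃ := by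
  have h1 : A * Aᵀ = 1 := mul_eq_one_comm.mp hA
  have hadj : A.adjugate = Aᵀ := by
    rw [← Matrix.inv_eq_left_inv hA, Matrix.inv_def, hdet]; simp
  rw [Matrix.adjugate_fin_three] at hadj
  have col1 := congrFun (congrFun hA 0) 0
  have col2 := congrFun (congrFun hA 1) 1
  have row3 := congrFun (congrFun h1 2) 2
  have r13 := congrFun (congrFun h1 0) 2
  have r23 := congrFun (congrFun h1 1) 2
  have c01 := congrFun (congrFun hadj 0) 1
  have c00 := congrFun (congrFun hadj 0) 0
  have c02 := congrFun (congrFun hadj 2) 0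
  have c12 := congrFun (congrFun hadj 2) 1
  simp [Matrix.mul_apply, Fin.sum_univ_three, Matrix.one_apply] at col1 col2 row3 r13 r23 c01 c00 c02 c12
  have ht2 : A 2 0 ^ 2 ≤ 1 := by nlinarith [sq_nonneg (A 2 1), sq_nonneg (A 2 2)]
  have hb := Real.arcsin_mem_Icc (A 2 0)
  have sinb : Real.sin (Real.arcsin (A 2 0)) = A 2 0 :=
    Real.sin_arcsin (by nlinarith) (by nlinarith)
  have cosb : Real.cos (Real.arcsin (A 2 0)) = Real.sqrt (1 - A 2 0 ^ 2) :=
    Real.cos_arcsin _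
  rcases lt_or_eq_of_le ht2 with hlt | heq
  · -- Main case: `cos θ₁₃ > 0`.
    set cb := Real.sqrt (1 - A 2 0 ^ 2) with hcbdef
    have hcbpos : 0 < cb := Real.sqrt_pos.mpr (by linarith)
    have hcb2 : cb ^ 2 = 1 - A 2 0 ^ 2 := Real.sq_sqrt (by linarith)
    have hcbne : cb ≠ 0 := ne_of_gt hcbpos
    set z1 : ℂ := ⟨A 0 0, A 1 0⟩ with hz1def
    have habs1 : ‖z1‖ = cb := by
      rw [Complex.norm_def, hz1def, Complex.normSq_mk, hcbdef]
      congr 1; nlinarith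
    have hz1 : z1 ≠ 0 := by
      intro h; rw [h] at habs1; simp at habs1; exact hcbne habs1.symm
    set z2 : ℂ := ⟨A 2 2, A 2 1⟩ with hz2def
    have habs2 : ‖z2‖ = cb := by
      rw [Complex.norm_def, hz2def, Complex.normSq_mk, hcbdef]
      congr 1; nlinarith
    have hz2 : z2 ≠ 0 := by
      intro h; rw [h] at habs2; simp at habs2; exact hcbne habs2.symm
    have cosa : Real.cos z1.arg = A 0 0 / cb := by rw [Complex.cos_arg hz1, habs1]
    have sina : Real.sin z1.arg = A 1 0 / cb := by rw [Complex.sin_arg, habs1]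
    have cosc : Real.cos z2.arg = A 2 2 / cb := by rw [Complex.cos_arg hz2, habs2]
    have sinc : Real.sin z2.arg = A 2 1 / cb := by rw [Complex.sin_arg, habs2]
    have hcb2' : cb ^ 2 = A 2 1 ^ 2 + A 2 2 ^ 2 := by rw [hcb2]; nlinarith
    have e00 : A 0 0 / cb * cb = A 0 0 := div_mul_cancel₀ _ hcbne
    have e10 : A 1 0 / cb * cb = A 1 0 := div_mul_cancel₀ _ hcbne
    have e21 : cb * (A 2 1 / cb) = A 2 1 := by field_simp
    have e22 : cb * (A 2 2 / cb) = A 2 2 := by field_simp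
    have e01 : -(A 0 0 / cb * A 2 0 * (A 2 1 / cb)) - A 1 0 / cb * (A 2 2 / cb) = A 0 1 := by
      field_simp
      linear_combination (-A 0 1) * hcb2' + (-A 2 1) * r13 +
        (A 2 2) * c01
    have e02 : -(A 0 0 / cb * A 2 0 * (A 2 2 / cb)) + A 1 0 / cb * (A 2 1 / cb) = A 0 2 := by
      field_simp
      linear_combination (-A 0 2) * hcb2' + (-A 2 2) * r13 +
        (-A 2 1) * c01
    have e11 : -(A 1 0 / cb * A 2 0 * (A 2 1 / cb)) + A 0 0 / cb * (A 2 2 / cb) = A 1 1 := by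
      field_simp
      linear_combination (-A 1 1) * hcb2' + (-A 2 1) * r23 +
        (-A 2 2) * c00
    have e12 : -(A 1 0 / cb * A 2 0 * (A 2 2 / cb)) - A 0 0 / cb * (A 2 1 / cb) = A 1 2 := by
      field_simp
      linear_combination (-A 1 2) * hcb2' + (-A 2 2) * r23 +
        (A 2 1) * c00
    refine ⟨z1.arg, Real.arcsin (A 2 0), z2.arg, Complex.arg_mem_Ioc _,
      Complex.arg_mem_Ioc _, hb, ?_⟩
    rw [elemRot_prod_eq, sinb, cosb, cosa, sina, cosc, sinc, e00, e10, e21, e22, e01,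
      e02, e11, e12]
    exact Matrix.eta_fin_three A
  · -- Degenerate case: `A 2 0 = ±1`.
    have hsum2 : A 2 1 ^ 2 + A 2 2 ^ 2 = 0 := by nlinarith
    have hsum1 : A 0 0 ^ 2 + A 1 0 ^ 2 = 0 := by nlinarith
    have z21 : A 2 1 = 0 := pow_eq_zero_iff two_ne_zero |>.mp
      ((add_eq_zero_iff_of_nonneg (sq_nonneg _) (sq_nonneg _)).mp hsum2).1
    have z22 : A 2 2 = 0 := pow_eq_zero_iff two_ne_zero |>.mp
      ((add_eq_zero_iff_of_nonneg (sq_nonneg _) (sq_nonneg _)).mp hsum2).2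
    have z00 : A 0 0 = 0 := pow_eq_zero_iff two_ne_zero |>.mp
      ((add_eq_zero_iff_of_nonneg (sq_nonneg _) (sq_nonneg _)).mp hsum1).1
    have z10 : A 1 0 = 0 := pow_eq_zero_iff two_ne_zero |>.mp
      ((add_eq_zero_iff_of_nonneg (sq_nonneg _) (sq_nonneg _)).mp hsum1).2
    set z1 : ℂ := ⟨A 1 1, -A 0 1⟩ with hz1def
    have habs1 : ‖z1‖ = 1 := by
      rw [Complex.norm_def, hz1def, Complex.normSq_mk]
      rw [show A 1 1 * A 1 1 + -A 0 1 * -A 0 1 = 1 by nlinarith]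
      exact Real.sqrt_one
    have hz1 : z1 ≠ 0 := by
      intro h; rw [h] at habs1; simp at habs1
    have cosa : Real.cos z1.arg = A 1 1 := by rw [Complex.cos_arg hz1, habs1]; simp [hz1def]
    have sina : Real.sin z1.arg = -A 0 1 := by rw [Complex.sin_arg, habs1]; simp [hz1def]
    have cosb0 : Real.cos (Real.arcsin (A 2 0)) = 0 := by
      rw [cosb, show (1 : ℝ) - A 2 0 ^ 2 = 0 by linarith, Real.sqrt_zero]
    have e00 : A 1 1 * 0 = A 0 0 := by rw [z00]; ring
    have e01 : -(A 1 1 * A 2 0 * 0) - -A 0 1 * 1 = A 0 1 := by ring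
    have e02 : -(A 1 1 * A 2 0 * 1) + -A 0 1 * 0 = A 0 2 := by
      linear_combination c02 - A 1 0 * z21
    have e10 : -A 0 1 * 0 = A 1 0 := by linear_combination -z10
    have e11 : -(-A 0 1 * A 2 0 * 0) + A 1 1 * 1 = A 1 1 := by ring
    have e12 : -(-A 0 1 * A 2 0 * 1) - A 1 1 * 0 = A 1 2 := by
      linear_combination c12 + A 0 0 * z21
    have e21 : (0 : ℝ) * 0 = A 2 1 := by linear_combination -z21
    have e22 : (0 : ℝ) * 1 = A 2 2 := by linear_combination -z22
    refine ⟨z1.arg, Real.arcsin (A 2 0), 0, Complex.arg_mem_Ioc _,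
      ⟨by linarith [Real.pi_pos], le_of_lt Real.pi_pos⟩, hb, ?_⟩
    rw [elemRot_prod_eq, sinb, cosb0, cosa, sina, Real.cos_zero, Real.sin_zero, e01, e02, e11,
      e12, e00, e10, e21, e22]
    exact Matrix.eta_fin_three A
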